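/- Let C be a small category. The nerve N(C), viewed as a simplicial set, satisfies the Segal condition: for all m, n ≥ 0 the canonical map N(C)_{m+n} → N(C)_m ×_{N(C)_0} N(C)_n is a bijection. Conversely, any simplicial set satisfying this Segal condition is isomorphic to the nerve of a category. -/

import Mathlib

open CategoryTheory Opposite

universe u v

/-- The inclusion `[m] → [m+n]`, `(0 < ⋯ < m) ↦ (0 < ⋯ < m)`. -/
def iota1 (m n : ℕ) : SimplexCategory.mk m ⟶ SimplexCategory.mk (m + n) :=
  SimplexCategory.Hom.mk ⟨fun i => Fin.castLE (by simp only [SimplexCategory.len_mk]; omega) i, fun _ _ h => h⟩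

/-- The inclusion `[n] → [m+n]`, `(0 < ⋯ < n) ↦ (m < ⋯ < m+n)`. -/
def iota2 (m n : ℕ) : SimplexCategory.mk n ⟶ SimplexCategory.mk (m + n) :=
  SimplexCategory.Hom.mk ⟨fun i => ⟨m + i.1, by simp only [SimplexCategory.len_mk]; omega⟩, fun i j h => by
    simp only [Fin.mk_le_mk]
    exact Nat.add_le_add_left h m⟩

/-- The Segal map `X_{m+n} → X_m × X_n` of a simplicial set, whose corestriction to the
fiber product `X_m ×_{X_0} X_n` is the Segal map. -/
def segalPair (X : SSet.{u}) (m n : ℕ) (σ : X.obj (op (SimplexCategory.mk (m + n)))) :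
    X.obj (op (SimplexCategory.mk m)) × X.obj (op (SimplexCategory.mk n)) :=
  (X.map (iota1 m n).op σ, X.map (iota2 m n).op σ)

/-- The fiber product `X_m ×_{X_0} X_n`: pairs whose last, resp. first, vertices agree. -/
def segalCompatible (X : SSet.{u}) (m n : ℕ) :
    Set (X.obj (op (SimplexCategory.mk m)) × X.obj (op (SimplexCategory.mk n))) :=
  {p | X.map (SimplexCategory.const (SimplexCategory.mk 0) (SimplexCategory.mk m)
        (Fin.last m)).op p.1 =
      X.map (SimplexCategory.const (SimplexCategory.mk 0) (SimplexCategory.mk n) 0).op p.2}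

/-- A simplicial set satisfies the Segal condition if, for all `m, n ≥ 0`, the canonical map
`X_{m+n} → X_m ×_{X_0} X_n` is a bijection. -/
def SatisfiesSegal (X : SSet.{u}) : Prop :=
  ∀ m n : ℕ, Function.Injective (segalPair X m n) ∧
    Set.range (segalPair X m n) = segalCompatible X m n


section SegalAux

open SSet SimplexCategory Simplicial

variable {X : SSet.{u}}

lemma const_comp_iota1 (m n : ℕ) (i : Fin (m + 1)) :
    const ⦋0⦌ ⦋m⦌ i ≫ iota1 m n = const ⦋0⦌ ⦋m + n⦌
      ⟨i.1, by simp only [SimplexCategory.len_mk]; omega⟩ := by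
  ext x
  rfl

lemma const_comp_iota2 (m n : ℕ) (i : Fin (n + 1)) :
    const ⦋0⦌ ⦋n⦌ i ≫ iota2 m n = const ⦋0⦌ ⦋m + n⦌
      ⟨m + i.1, by simp only [SimplexCategory.len_mk]; omega⟩ := by
  ext x
  rfl

lemma mkOfSucc_comp_iota1 {m : ℕ} (n : ℕ) (i : Fin m) :
    mkOfSucc i ≫ iota1 m n = mkOfSucc ⟨i.1, by omega⟩ := by
  apply Hom.ext_one_left <;> rfl

lemma mkOfSucc_comp_iota2 {n : ℕ} (m : ℕ) (i : Fin n) :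
    mkOfSucc i ≫ iota2 m n = mkOfSucc ⟨m + i.1, by omega⟩ := by
  apply Hom.ext_one_left
  · apply Fin.ext
    rfl
  · apply Fin.ext
    show m + (i.1 + 1) = (m + i.1) + 1
    omega

end SegalAux
namespace SegalW

open SSet SimplexCategory Simplicial

variable {X : SSet.{u}} [SSet.IsStrictSegal X]

noncomputable def spineToSimplex {n : ℕ} (f : SSet.Path X n) : X _⦋n⦌ :=
  (SSet.StrictSegal.ofIsStrictSegal X).spineToSimplex f

lemma spine_spineToSimplex {n : ℕ} (f : SSet.Path X n) : X.spine n (spineToSimplex f) = f :=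
  (SSet.StrictSegal.ofIsStrictSegal X).spine_spineToSimplex_apply f

lemma spineInjective {n : ℕ} : Function.Injective (X.spine n) :=
  (SSet.StrictSegal.ofIsStrictSegal X).spineInjective

lemma spineToSimplex_vertex {n : ℕ} (i : Fin (n + 1)) (f : SSet.Path X n) :
    X.map (SimplexCategory.const ⦋0⦌ ⦋n⦌ i).op (spineToSimplex f) = f.vertex i :=
  (SSet.StrictSegal.ofIsStrictSegal X).spineToSimplex_vertex i f

lemma spineToSimplex_arrow {n : ℕ} (i : Fin n) (f : SSet.Path X n) :
    X.map (mkOfSucc i).op (spineToSimplex f) = f.arrow i :=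
  (SSet.StrictSegal.ofIsStrictSegal X).spineToSimplex_arrow i f

noncomputable def spineToDiagonal {n : ℕ} (f : SSet.Path X n) : X _⦋1⦌ :=
  SimplicialObject.diagonal X (spineToSimplex f)

lemma spine_δ_arrow_lt {n : ℕ} (f : SSet.Path X (n + 1)) {i : Fin n} {j : Fin (n + 2)}
    (h : i.succ.castSucc < j) :
    (X.spine n (X.δ j (spineToSimplex f))).arrow i = f.arrow i.castSucc :=
  (SSet.StrictSegal.ofIsStrictSegal X).spine_δ_arrow_lt f h

lemma spine_δ_arrow_gt {n : ℕ} (f : SSet.Path X (n + 1)) {i : Fin n} {j : Fin (n + 2)}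
    (h : j < i.succ.castSucc) :
    (X.spine n (X.δ j (spineToSimplex f))).arrow i = f.arrow i.succ :=
  (SSet.StrictSegal.ofIsStrictSegal X).spine_δ_arrow_gt f h

lemma spine_δ_arrow_eq {n : ℕ} (f : SSet.Path X (n + 1)) {i : Fin n} {j : Fin (n + 2)}
    (h : j = i.succ.castSucc) :
    (X.spine n (X.δ j (spineToSimplex f))).arrow i =
      spineToDiagonal (f.interval i 2 (by omega)) :=
  (SSet.StrictSegal.ofIsStrictSegal X).spine_δ_arrow_eq f h

end SegalW
section SegalAux2

open SSet SimplexCategory Simplicial SegalW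

variable {X : SSet.{u}}

/-- Concatenation of a path of length `m` and a path of length `n` whose endpoints agree. -/
def gluePath {m n : ℕ} (a : SSet.Path X m) (b : SSet.Path X n)
    (hab : a.vertex (Fin.last m) = b.vertex 0) : SSet.Path X (m + n) where
  vertex i := (if h : i.1 < m then a.vertex ⟨i.1, by omega⟩ else b.vertex ⟨i.1 - m, by omega⟩ : X _⦋0⦌)
  arrow i := (if h : i.1 < m then a.arrow ⟨i.1, h⟩ else b.arrow ⟨i.1 - m, by omega⟩ : X _⦋1⦌)
  arrow_src i := by
    show X.δ 1 _ = _
    by_cases h : i.1 < m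
    · simp only [dif_pos h, Fin.coe_castSucc, dif_pos h]
      exact a.arrow_src ⟨i.1, h⟩
    · simp only [dif_neg h, Fin.coe_castSucc, dif_neg h]
      have := b.arrow_src ⟨i.1 - m, by omega⟩
      convert this using 2
      exact Fin.ext rfl
  arrow_tgt i := by
    show X.δ 0 _ = _
    by_cases h : i.1 < m
    · simp only [dif_pos h, Fin.val_succ]
      by_cases h' : i.1 + 1 < m
      · rw [dif_pos h']
        have := a.arrow_tgt ⟨i.1, h⟩
        convert this using 2
        exact Fin.ext rfl
      · rw [dif_neg h']
        have hm : i.1 + 1 = m := by omega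
        have := a.arrow_tgt ⟨i.1, h⟩
        rw [this]
        have h1 : (⟨i.1, h⟩ : Fin m).succ = Fin.last m := by
          apply Fin.ext; exact hm
        rw [h1, hab]
        congr 1
        apply Fin.ext
        show 0 = i.1 + 1 - m
        omega
    · simp only [dif_neg h, Fin.val_succ]
      rw [dif_neg (by omega)]
      have := b.arrow_tgt ⟨i.1 - m, by omega⟩
      rw [this]
      congr 1
      apply Fin.ext
      show (i.1 - m) + 1 = i.1 + 1 - m
      omega

section glue

variable {m n : ℕ} {a : SSet.Path X m} {b : SSet.Path X n}
  {hab : a.vertex (Fin.last m) = b.vertex 0}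

lemma gluePath_vertex₁ (j : Fin (m + n + 1)) (i : Fin (m + 1)) (hj : j.1 = i.1) :
    (gluePath a b hab).vertex j = a.vertex i := by
  show dite _ _ _ = _
  by_cases h : j.1 < m
  · rw [dif_pos h]
    congr 1
    exact Fin.ext hj
  · rw [dif_neg h]
    have h2 := i.isLt
    have hi : i = Fin.last m := Fin.ext (by simp only [Fin.val_last]; omega)
    rw [hi, hab]
    congr 1
    exact Fin.ext (by simp only [Fin.val_zero]; omega)

lemma gluePath_vertex₂ (j : Fin (m + n + 1)) (i : Fin (n + 1)) (hj : j.1 = m + i.1) :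
    (gluePath a b hab).vertex j = b.vertex i := by
  show dite _ _ _ = _
  rw [dif_neg (by omega)]
  congr 1
  exact Fin.ext (by show j.1 - m = i.1; omega)

lemma gluePath_arrow₁ (j : Fin (m + n)) (i : Fin m) (hj : j.1 = i.1) :
    (gluePath a b hab).arrow j = a.arrow i := by
  show dite _ _ _ = _
  rw [dif_pos (by omega)]
  congr 1
  exact Fin.ext hj

lemma gluePath_arrow₂ (j : Fin (m + n)) (i : Fin n) (hj : j.1 = m + i.1) :
    (gluePath a b hab).arrow j = b.arrow i := by
  show dite _ _ _ = _
  rw [dif_neg (by omega)]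
  congr 1
  exact Fin.ext (by show j.1 - m = i.1; omega)

end glue

theorem satisfiesSegal_of_strictSegal (X : SSet.{u}) [SSet.IsStrictSegal X] :
    SatisfiesSegal X := by
  intro m n
  constructor
  · -- injectivity
    intro σ σ' hps
    have h1 : X.map (iota1 m n).op σ = X.map (iota1 m n).op σ' := congrArg Prod.fst hps
    have h2 : X.map (iota2 m n).op σ = X.map (iota2 m n).op σ' := congrArg Prod.snd hps
    apply spineInjective
    show X.spine (m + n) σ = X.spine (m + n) σ'
    ext i
    · -- vertices
      show X.map (const ⦋0⦌ ⦋m + n⦌ i).op σ = X.map (const ⦋0⦌ ⦋m + n⦌ i).op σ'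
      by_cases h : i.1 < m + 1
      · have : const ⦋0⦌ ⦋m + n⦌ i = const ⦋0⦌ ⦋m⦌ ⟨i.1, h⟩ ≫ iota1 m n := by
          rw [const_comp_iota1]
        rw [this, op_comp, FunctorToTypes.map_comp_apply, FunctorToTypes.map_comp_apply, h1]
      · have : const ⦋0⦌ ⦋m + n⦌ i = const ⦋0⦌ ⦋n⦌
            ⟨i.1 - m, by simp only [SimplexCategory.len_mk]; omega⟩ ≫ iota2 m n := by
          rw [const_comp_iota2]
          congr 1
          apply Fin.ext
          show i.1 = m + (i.1 - m)
          omega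
        rw [this, op_comp, FunctorToTypes.map_comp_apply, FunctorToTypes.map_comp_apply, h2]
    · -- arrows
      show X.map (mkOfSucc i).op σ = X.map (mkOfSucc i).op σ'
      by_cases h : i.1 < m
      · have : mkOfSucc i = mkOfSucc ⟨i.1, h⟩ ≫ iota1 m n := by
          rw [mkOfSucc_comp_iota1]
        rw [this, op_comp, FunctorToTypes.map_comp_apply, FunctorToTypes.map_comp_apply, h1]
      · have : mkOfSucc i = mkOfSucc ⟨i.1 - m, by omega⟩ ≫ iota2 m n := by
          rw [mkOfSucc_comp_iota2]
          congr 1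
          apply Fin.ext
          show i.1 = m + (i.1 - m)
          omega
        rw [this, op_comp, FunctorToTypes.map_comp_apply, FunctorToTypes.map_comp_apply, h2]
  · -- range
    ext p
    constructor
    · rintro ⟨σ, rfl⟩
      show X.map _ (X.map (iota1 m n).op σ) = X.map _ (X.map (iota2 m n).op σ)
      rw [← FunctorToTypes.map_comp_apply, ← FunctorToTypes.map_comp_apply, ← op_comp, ← op_comp]
      have : const ⦋0⦌ ⦋m⦌ (Fin.last m) ≫ iota1 m n = const ⦋0⦌ ⦋n⦌ 0 ≫ iota2 m n := by
        rw [const_comp_iota1, const_comp_iota2]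
        congr 1
      rw [this]
    · intro hp
      obtain ⟨a, b⟩ := p
      have hab : (X.spine m a).vertex (Fin.last m) = (X.spine n b).vertex 0 := hp
      set f := gluePath (X.spine m a) (X.spine n b) hab with hf
      refine ⟨spineToSimplex f, ?_⟩
      have key : ∀ (l : ℕ) (c : X.obj (Opposite.op (SimplexCategory.mk l)))
          (ι : SimplexCategory.mk l ⟶ SimplexCategory.mk (m + n))
          (hv : ∀ i : Fin (l + 1),
            X.map (const (SimplexCategory.mk 0) (SimplexCategory.mk l) i ≫ ι).op
              (spineToSimplex f)
              = X.map (const (SimplexCategory.mk 0) (SimplexCategory.mk l) i).op c)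
          (ha : ∀ i : Fin l, X.map (mkOfSucc i ≫ ι).op (spineToSimplex f)
              = X.map (mkOfSucc i).op c),
          X.map ι.op (spineToSimplex f) = c := by
        intro l c ι hv ha
        apply spineInjective
        show X.spine l _ = X.spine l c
        ext i
        · show X.map (const (SimplexCategory.mk 0) (SimplexCategory.mk l) i).op
            (X.map ι.op _) = _
          rw [← FunctorToTypes.map_comp_apply, ← op_comp]
          exact hv i
        · show X.map (mkOfSucc i).op (X.map ι.op _) = _
          rw [← FunctorToTypes.map_comp_apply, ← op_comp]
          exact ha i
      have hiota1 : X.map (iota1 m n).op (spineToSimplex f) = a := by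
        apply key
        · intro i
          rw [const_comp_iota1, spineToSimplex_vertex]
          exact gluePath_vertex₁ _ i rfl
        · intro i
          rw [mkOfSucc_comp_iota1, spineToSimplex_arrow]
          exact gluePath_arrow₁ _ i rfl
      have hiota2 : X.map (iota2 m n).op (spineToSimplex f) = b := by
        apply key
        · intro i
          rw [const_comp_iota2, spineToSimplex_vertex]
          exact gluePath_vertex₂ _ i rfl
        · intro i
          rw [mkOfSucc_comp_iota2, spineToSimplex_arrow]
          exact gluePath_arrow₂ _ i rfl
      show (X.map (iota1 m n).op _, X.map (iota2 m n).op _) = (a, b)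
      rw [hiota1, hiota2]

end SegalAux2
section SegalAux3

open SSet SimplexCategory Simplicial

variable {X : SSet.{u}}

lemma iota2_eq_mkOfSucc (n : ℕ) : iota2 n 1 = mkOfSucc (⟨n, by omega⟩ : Fin (n + 1)) := by
  apply Hom.ext_one_left
  · apply Fin.ext
    show n + 0 = n
    omega
  · apply Fin.ext
    show n + 1 = n + 1
    rfl

theorem spine_bijective_of_satisfiesSegal (X : SSet.{u}) (hX : SatisfiesSegal X) :
    ∀ n, Function.Bijective (X.spine n) := by
  intro n
  induction n with
  | zero =>
    constructor
    · intro σ σ' h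
      have h0 : (X.spine 0 σ).vertex 0 = (X.spine 0 σ').vertex 0 := by rw [h]
      simpa using h0
    · intro f
      refine ⟨f.vertex 0, ?_⟩
      refine SSet.Path.ext (funext fun i => ?_) (funext fun i => ?_)
      · fin_cases i
        simpa using rfl
      · exact i.elim0
  | succ n ih =>
    have hinj := (hX n 1).1
    have hrange := (hX n 1).2
    constructor
    · intro σ σ' h
      apply hinj
      have harr : ∀ i : Fin (n + 1), X.map (mkOfSucc i).op σ = X.map (mkOfSucc i).op σ' := by
        intro i
        have := congrArg (fun p => SSet.Path.arrow p i) h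
        simpa using this
      have hver : ∀ i : Fin (n + 2), X.map (const ⦋0⦌ ⦋n + 1⦌ i).op σ
          = X.map (const ⦋0⦌ ⦋n + 1⦌ i).op σ' := by
        intro i
        have := congrArg (fun p => SSet.Path.vertex p i) h
        simpa using this
      show (_, _) = (_, _)
      have hfst : X.map (iota1 n 1).op σ = X.map (iota1 n 1).op σ' := by
        apply ih.1
        ext i
        · show X.map (const ⦋0⦌ ⦋n⦌ i).op (X.map (iota1 n 1).op σ)
            = X.map (const ⦋0⦌ ⦋n⦌ i).op (X.map (iota1 n 1).op σ')
          rw [← FunctorToTypes.map_comp_apply, ← op_comp, const_comp_iota1,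
            ← FunctorToTypes.map_comp_apply, ← op_comp, const_comp_iota1]
          exact hver _
        · show X.map (mkOfSucc i).op (X.map (iota1 n 1).op σ)
            = X.map (mkOfSucc i).op (X.map (iota1 n 1).op σ')
          rw [← FunctorToTypes.map_comp_apply, ← op_comp, mkOfSucc_comp_iota1,
            ← FunctorToTypes.map_comp_apply, ← op_comp, mkOfSucc_comp_iota1]
          exact harr _
      have hsnd : X.map (iota2 n 1).op σ = X.map (iota2 n 1).op σ' := by
        rw [iota2_eq_mkOfSucc]
        exact harr _
      rw [hfst, hsnd]
    · intro f
      obtain ⟨a, ha⟩ := ih.2 (f.interval 0 n (by omega))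
      set b := f.arrow ⟨n, by omega⟩ with hb
      have hcompat : (a, b) ∈ segalCompatible X n 1 := by
        show X.map _ a = X.map _ b
        have h1 : X.map (const ⦋0⦌ ⦋n⦌ (Fin.last n)).op a = (X.spine n a).vertex (Fin.last n) :=
          rfl
        have h2 : const (SimplexCategory.mk 0) (SimplexCategory.mk 1) 0 = SimplexCategory.δ 1 := by
          apply Hom.ext_zero_left
          rfl
        rw [h1, ha, h2]
        show _ = X.δ 1 b
        rw [hb, f.arrow_src ⟨n, by omega⟩]
        show f.vertex ⟨0 + n, _⟩ = f.vertex _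
        congr 1
        apply Fin.ext
        show 0 + n = n
        omega
      have : (a, b) ∈ Set.range (segalPair X n 1) := by rw [hrange]; exact hcompat
      obtain ⟨σ, hσ⟩ := this
      have hσ1 : X.map (iota1 n 1).op σ = a := congrArg Prod.fst hσ
      have hσ2 : X.map (iota2 n 1).op σ = b := congrArg Prod.snd hσ
      refine ⟨σ, ?_⟩
      apply SSet.Path.ext'
      intro i
      show X.map (mkOfSucc i).op σ = f.arrow i
      by_cases h : i.1 < n
      · have : mkOfSucc i = mkOfSucc ⟨i.1, h⟩ ≫ iota1 n 1 := by
          rw [mkOfSucc_comp_iota1]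
        rw [this, op_comp, FunctorToTypes.map_comp_apply, hσ1]
        have := congrArg (fun p => SSet.Path.arrow p ⟨i.1, h⟩) ha
        rw [show X.map (mkOfSucc ⟨i.1, h⟩).op a = (X.spine n a).arrow ⟨i.1, h⟩ from rfl, this]
        show f.arrow ⟨0 + i.1, _⟩ = f.arrow i
        congr 1
        apply Fin.ext
        show 0 + i.1 = i.1
        omega
      · have hi : i = ⟨n, by omega⟩ := by
          apply Fin.ext
          show i.1 = n
          omega
        have : mkOfSucc i = iota2 n 1 := by
          rw [iota2_eq_mkOfSucc, hi]
        rw [this, hσ2, hb, hi]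
    
end SegalAux3
section SegalAux4

open SSet SimplexCategory Simplicial SegalW SimplicialObject

variable {X : SSet.{u}}

/-- A `StrictSegal` structure from bijectivity of the spine maps. -/
noncomputable def strictSegalOfSpineBijective (X : SSet.{u})
    (hb : ∀ n, Function.Bijective (X.spine n)) : SSet.IsStrictSegal X where
  segal n := hb n

/-- The length-2 path determined by two compatible edges. -/
def pairPath (e f : X.obj (Opposite.op (SimplexCategory.mk 1)))
    (h : X.δ 0 e = X.δ 1 f) : SSet.Path X 2 where
  vertex i := match i with
    | 0 => X.δ 1 e
    | 1 => X.δ 0 e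
    | 2 => X.δ 0 f
  arrow i := match i with
    | 0 => e
    | 1 => f
  arrow_src i := match i with
    | 0 => rfl
    | 1 => h.symm
  arrow_tgt i := match i with
    | 0 => rfl
    | 1 => rfl

/-- The length-3 path determined by three compatible edges. -/
def triPath (e f g : X.obj (Opposite.op (SimplexCategory.mk 1)))
    (h1 : X.δ 0 e = X.δ 1 f) (h2 : X.δ 0 f = X.δ 1 g) : SSet.Path X 3 where
  vertex i := match i with
    | 0 => X.δ 1 e
    | 1 => X.δ 0 e
    | 2 => X.δ 0 f
    | 3 => X.δ 0 g
  arrow i := match i with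
    | 0 => e
    | 1 => f
    | 2 => g
  arrow_src i := match i with
    | 0 => rfl
    | 1 => h1.symm
    | 2 => h2.symm
  arrow_tgt i := match i with
    | 0 => rfl
    | 1 => rfl
    | 2 => rfl

variable [SSet.IsStrictSegal X]

lemma spineToDiagonal_src {n : ℕ} (p : SSet.Path X n) :
    X.δ 1 (spineToDiagonal p) = p.vertex 0 := by
  show X.map (SimplexCategory.δ 1).op (X.map (diag n).op (spineToSimplex p)) = _
  rw [← FunctorToTypes.map_comp_apply, ← op_comp]
  have : (SimplexCategory.δ (1 : Fin 2)) ≫ diag n = const ⦋0⦌ ⦋n⦌ 0 := by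
    apply Hom.ext_zero_left
    rfl
  rw [this, spineToSimplex_vertex]

lemma spineToDiagonal_tgt {n : ℕ} (p : SSet.Path X n) :
    X.δ 0 (spineToDiagonal p) = p.vertex (Fin.last n) := by
  show X.map (SimplexCategory.δ 0).op (X.map (diag n).op (spineToSimplex p)) = _
  rw [← FunctorToTypes.map_comp_apply, ← op_comp]
  have : (SimplexCategory.δ (0 : Fin 2)) ≫ diag n = const ⦋0⦌ ⦋n⦌ (Fin.last n) := by
    apply Hom.ext_zero_left
    show (Hom.toOrderHom (diag n)) ((Hom.toOrderHom (SimplexCategory.δ (0 : Fin 2))) 0)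
      = Fin.last n
    have h : (Hom.toOrderHom (SimplexCategory.δ (0 : Fin 2))) 0 = 1 := by decide
    rw [h]
    rfl
  rw [this, spineToSimplex_vertex]

/-- Composition of compatible edges in a strict Segal simplicial set. -/
noncomputable def eComp (e f : X.obj (Opposite.op (SimplexCategory.mk 1)))
    (h : X.δ 0 e = X.δ 1 f) : X.obj (Opposite.op (SimplexCategory.mk 1)) :=
  spineToDiagonal (pairPath e f h)

lemma spineToSimplex_pairPath_eq (e f : X.obj (Opposite.op (SimplexCategory.mk 1)))
    (h : X.δ 0 e = X.δ 1 f) (τ : X.obj (Opposite.op (SimplexCategory.mk 2)))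
    (h0 : X.map (mkOfSucc 0).op τ = e) (h1 : X.map (mkOfSucc 1).op τ = f) :
    spineToSimplex (pairPath e f h) = τ := by
  apply spineInjective
  show X.spine 2 _ = X.spine 2 τ
  rw [spine_spineToSimplex]
  apply SSet.Path.ext'
  intro i
  fin_cases i
  · exact h0.symm
  · exact h1.symm

lemma eComp_src (e f : X.obj (Opposite.op (SimplexCategory.mk 1)))
    (h : X.δ 0 e = X.δ 1 f) : X.δ 1 (eComp e f h) = X.δ 1 e :=
  spineToDiagonal_src (pairPath e f h)

lemma eComp_tgt (e f : X.obj (Opposite.op (SimplexCategory.mk 1)))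
    (h : X.δ 0 e = X.δ 1 f) : X.δ 0 (eComp e f h) = X.δ 0 f :=
  spineToDiagonal_tgt (pairPath e f h)

lemma eComp_eq_of_filler (e f : X.obj (Opposite.op (SimplexCategory.mk 1)))
    (h : X.δ 0 e = X.δ 1 f) (τ : X.obj (Opposite.op (SimplexCategory.mk 2)))
    (h0 : X.map (mkOfSucc 0).op τ = e) (h1 : X.map (mkOfSucc 1).op τ = f) :
    eComp e f h = X.map (diag 2).op τ := by
  show SimplicialObject.diagonal X (spineToSimplex (pairPath e f h)) = _
  rw [spineToSimplex_pairPath_eq e f h τ h0 h1]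
  rfl

lemma eComp_id_left (e : X.obj (Opposite.op (SimplexCategory.mk 1)))
    (h : X.δ 0 (X.σ 0 (X.δ 1 e)) = X.δ 1 e) :
    eComp (X.σ 0 (X.δ 1 e)) e h = e := by
  have key := eComp_eq_of_filler (X.σ 0 (X.δ 1 e)) e h
    (X.map (SimplexCategory.σ (0 : Fin 2)).op e) ?_ ?_
  · rw [key]
    have : diag 2 ≫ SimplexCategory.σ (0 : Fin 2) = 𝟙 (SimplexCategory.mk 1) := by
      apply Hom.ext_one_left <;> rfl
    rw [← FunctorToTypes.map_comp_apply, ← op_comp, this, op_id, FunctorToTypes.map_id_apply]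
  · rw [← FunctorToTypes.map_comp_apply, ← op_comp]
    have c : mkOfSucc (0 : Fin 2) ≫ SimplexCategory.σ (0 : Fin 2)
        = (SimplexCategory.σ (0 : Fin 1) :
            SimplexCategory.mk 1 ⟶ SimplexCategory.mk 0) ≫ SimplexCategory.δ (1 : Fin 2) := by
      apply Hom.ext_one_left <;> decide
    rw [c, op_comp, FunctorToTypes.map_comp_apply]
    rfl
  · rw [← FunctorToTypes.map_comp_apply, ← op_comp]
    have : mkOfSucc (1 : Fin 2) ≫ SimplexCategory.σ (0 : Fin 2) = 𝟙 (SimplexCategory.mk 1) := by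
      apply Hom.ext_one_left <;> rfl
    rw [this, op_id, FunctorToTypes.map_id_apply]

end SegalAux4
section SegalAux5

open SSet SimplexCategory Simplicial SegalW SimplicialObject

variable {X : SSet.{u}}

lemma delta_sigma_zero (j : Fin 2) (x : X.obj (Opposite.op (SimplexCategory.mk 0))) :
    X.δ j (X.σ 0 x) = x := by
  show X.map (SimplexCategory.δ j).op (X.map (SimplexCategory.σ 0).op x) = x
  rw [← FunctorToTypes.map_comp_apply, ← op_comp]
  have : SimplexCategory.δ j ≫ SimplexCategory.σ 0 = 𝟙 (SimplexCategory.mk 0) := by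
    apply Hom.ext_zero_left
    exact @Subsingleton.elim (Fin 1) _ _ _
  rw [this, op_id, FunctorToTypes.map_id_apply]

variable [SSet.IsStrictSegal X]

lemma eComp_id_right (e : X.obj (Opposite.op (SimplexCategory.mk 1)))
    (h : X.δ 0 e = X.δ 1 (X.σ 0 (X.δ 0 e))) :
    eComp e (X.σ 0 (X.δ 0 e)) h = e := by
  have key := eComp_eq_of_filler e (X.σ 0 (X.δ 0 e)) h
    (X.map (SimplexCategory.σ (1 : Fin 2)).op e) ?_ ?_
  · rw [key]
    have : diag 2 ≫ SimplexCategory.σ (1 : Fin 2) = 𝟙 (SimplexCategory.mk 1) := by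
      apply Hom.ext_one_left <;> decide
    rw [← FunctorToTypes.map_comp_apply, ← op_comp, this, op_id, FunctorToTypes.map_id_apply]
  · rw [← FunctorToTypes.map_comp_apply, ← op_comp]
    have : mkOfSucc (0 : Fin 2) ≫ SimplexCategory.σ (1 : Fin 2) = 𝟙 (SimplexCategory.mk 1) := by
      apply Hom.ext_one_left <;> decide
    rw [this, op_id, FunctorToTypes.map_id_apply]
  · rw [← FunctorToTypes.map_comp_apply, ← op_comp]
    have c : mkOfSucc (1 : Fin 2) ≫ SimplexCategory.σ (1 : Fin 2)
        = (SimplexCategory.σ (0 : Fin 1) :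
            SimplexCategory.mk 1 ⟶ SimplexCategory.mk 0) ≫ SimplexCategory.δ (0 : Fin 2) := by
      apply Hom.ext_one_left <;> decide
    rw [c, op_comp, FunctorToTypes.map_comp_apply]
    rfl

lemma interval_triPath_left (e f g : X.obj (Opposite.op (SimplexCategory.mk 1)))
    (h1 : X.δ 0 e = X.δ 1 f) (h2 : X.δ 0 f = X.δ 1 g) :
    (triPath e f g h1 h2).interval 0 2 (by omega) = pairPath e f h1 := by
  apply SSet.Path.ext'
  intro i
  fin_cases i <;> rfl

lemma interval_triPath_right (e f g : X.obj (Opposite.op (SimplexCategory.mk 1)))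
    (h1 : X.δ 0 e = X.δ 1 f) (h2 : X.δ 0 f = X.δ 1 g) :
    (triPath e f g h1 h2).interval 1 2 (by omega) = pairPath f g h2 := by
  apply SSet.Path.ext'
  intro i
  fin_cases i <;> rfl

lemma eComp_assoc (e f g : X.obj (Opposite.op (SimplexCategory.mk 1)))
    (h1 : X.δ 0 e = X.δ 1 f) (h2 : X.δ 0 f = X.δ 1 g)
    (h1' : X.δ 0 (eComp e f h1) = X.δ 1 g)
    (h2' : X.δ 0 e = X.δ 1 (eComp f g h2)) :
    eComp (eComp e f h1) g h1' = eComp e (eComp f g h2) h2' := by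
  set p := triPath e f g h1 h2 with hp
  set τ := spineToSimplex p with hτ
  -- the composite `f ≫ g` as the diagonal of the face δ0 of τ
  have hfg : eComp f g h2 = X.map (diag 2).op (X.δ (0 : Fin 4) τ) := by
    apply eComp_eq_of_filler
    · have := spine_δ_arrow_gt p (i := 0) (j := 0) (by decide)
      exact this
    · have := spine_δ_arrow_gt p (i := 1) (j := 0) (by decide)
      exact this
  -- LHS
  have hef : X.map (mkOfSucc 0).op (X.δ (1 : Fin 4) τ) = eComp e f h1 := by
    have := spine_δ_arrow_eq p (i := 0) (j := 1) (by decide)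
    rw [show (X.spine 2 (X.δ (1 : Fin 4) τ)).arrow 0
        = X.map (mkOfSucc 0).op (X.δ (1 : Fin 4) τ) from rfl] at this
    simp only [Fin.val_zero] at this
    rw [this, interval_triPath_left]
    rfl
  have hL : eComp (eComp e f h1) g h1' = X.map (diag 2).op (X.δ (1 : Fin 4) τ) := by
    apply eComp_eq_of_filler
    · exact hef
    · have := spine_δ_arrow_gt p (i := 1) (j := 1) (by decide)
      exact this
  have hfg' : X.map (mkOfSucc 1).op (X.δ (2 : Fin 4) τ) = eComp f g h2 := by
    have := spine_δ_arrow_eq p (i := 1) (j := 2) (by decide)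
    rw [show (X.spine 2 (X.δ (2 : Fin 4) τ)).arrow 1
        = X.map (mkOfSucc 1).op (X.δ (2 : Fin 4) τ) from rfl] at this
    simp only [Fin.val_one] at this
    rw [this, interval_triPath_right]
    rfl
  have hR : eComp e (eComp f g h2) h2' = X.map (diag 2).op (X.δ (2 : Fin 4) τ) := by
    apply eComp_eq_of_filler
    · have := spine_δ_arrow_lt p (i := 0) (j := 2) (by decide)
      exact this
    · exact hfg'
  rw [hL, hR]
  show X.map (diag 2).op (X.map (SimplexCategory.δ (1 : Fin 4)).op τ)
    = X.map (diag 2).op (X.map (SimplexCategory.δ (2 : Fin 4)).op τ)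
  rw [← FunctorToTypes.map_comp_apply, ← op_comp, ← FunctorToTypes.map_comp_apply, ← op_comp]
  have : diag 2 ≫ SimplexCategory.δ (1 : Fin 4) = diag 2 ≫ SimplexCategory.δ (2 : Fin 4) := by
    apply Hom.ext_one_left <;> decide
  rw [this]

/-- The category structure on the `0`-simplices of a strict Segal simplicial set. -/
noncomputable def segalCategory (X : SSet.{u}) [SSet.IsStrictSegal X] :
    SmallCategory (X.obj (Opposite.op (SimplexCategory.mk 0))) where
  Hom x y := {e : X.obj (Opposite.op (SimplexCategory.mk 1)) // X.δ 1 e = x ∧ X.δ 0 e = y}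
  id x := ⟨X.σ 0 x, delta_sigma_zero 1 x, delta_sigma_zero 0 x⟩
  comp {x y z} f g := ⟨eComp f.1 g.1 (f.2.2.trans g.2.1.symm),
    by rw [eComp_src]; exact f.2.1, by rw [eComp_tgt]; exact g.2.2⟩
  id_comp {x y} f := by
    obtain ⟨e, he1, he0⟩ := f
    subst he1 he0
    exact Subtype.ext (eComp_id_left e _)
  comp_id {x y} f := by
    obtain ⟨e, he1, he0⟩ := f
    subst he1 he0
    exact Subtype.ext (eComp_id_right e _)
  assoc {w x y z} f g h := by
    apply Subtype.ext
    exact eComp_assoc f.1 g.1 h.1 _ _ _ _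

end SegalAux5
section SegalAux6

open SSet SimplexCategory Simplicial SegalW SimplicialObject

attribute [local instance] segalCategory

variable (X : SSet.{u})

lemma map_eq_of_hom_eq {a b : SimplexCategory} {u v : a ⟶ b} (h : u = v)
    (σ : X.obj (Opposite.op b)) : X.map u.op σ = X.map v.op σ := by rw [h]

lemma delta_one_comp_mkOfLe {n : ℕ} (i j : Fin (n + 1)) (h : i ≤ j) :
    SimplexCategory.δ (1 : Fin 2) ≫ mkOfLe i j h
      = const (SimplexCategory.mk 0) (SimplexCategory.mk n) i := by
  apply Hom.ext_zero_left
  show (Hom.toOrderHom (mkOfLe i j h)) ((Hom.toOrderHom (SimplexCategory.δ (1 : Fin 2))) 0) = i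
  have h0 : (Hom.toOrderHom (SimplexCategory.δ (1 : Fin 2))) 0 = 0 := by decide
  rw [h0]
  rfl

lemma delta_zero_comp_mkOfLe {n : ℕ} (i j : Fin (n + 1)) (h : i ≤ j) :
    SimplexCategory.δ (0 : Fin 2) ≫ mkOfLe i j h
      = const (SimplexCategory.mk 0) (SimplexCategory.mk n) j := by
  apply Hom.ext_zero_left
  show (Hom.toOrderHom (mkOfLe i j h)) ((Hom.toOrderHom (SimplexCategory.δ (0 : Fin 2))) 0) = j
  have h0 : (Hom.toOrderHom (SimplexCategory.δ (0 : Fin 2))) 0 = 1 := by decide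
  rw [h0]
  rfl

variable [SSet.IsStrictSegal X]

/-- The composable string of arrows associated to an `n`-simplex. -/
noncomputable def toCA {n : ℕ} (σ : X.obj (Opposite.op (SimplexCategory.mk n))) :
    CategoryTheory.ComposableArrows (X.obj (Opposite.op (SimplexCategory.mk 0))) n where
  obj i := X.map (const (SimplexCategory.mk 0) (SimplexCategory.mk n) i).op σ
  map {i j} hij := ⟨X.map (mkOfLe i j (leOfHom hij)).op σ, by
      show X.map (SimplexCategory.δ 1).op _ = _
      rw [← FunctorToTypes.map_comp_apply, ← op_comp, delta_one_comp_mkOfLe], by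
      show X.map (SimplexCategory.δ 0).op _ = _
      rw [← FunctorToTypes.map_comp_apply, ← op_comp, delta_zero_comp_mkOfLe]⟩
  map_id i := by
    apply Subtype.ext
    show X.map (mkOfLe i i _).op σ = X.σ 0 _
    have c : mkOfLe i i (le_refl i) = (SimplexCategory.σ (0 : Fin 1) :
        SimplexCategory.mk 1 ⟶ SimplexCategory.mk 0)
          ≫ const (SimplexCategory.mk 0) (SimplexCategory.mk n) i := by
      apply Hom.ext_one_left <;> rfl
    rw [c, op_comp, FunctorToTypes.map_comp_apply]
    rfl
  map_comp {i j k} hij hjk := by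
    have hcomp : X.δ 0 (X.map (mkOfLe i j (leOfHom hij)).op σ)
        = X.δ 1 (X.map (mkOfLe j k (leOfHom hjk)).op σ) := by
      show X.map (SimplexCategory.δ 0).op _ = X.map (SimplexCategory.δ 1).op _
      rw [← FunctorToTypes.map_comp_apply, ← op_comp, delta_zero_comp_mkOfLe,
        ← FunctorToTypes.map_comp_apply, ← op_comp, delta_one_comp_mkOfLe]
    have h0 : X.map (mkOfSucc 0).op
        (X.map (mkOfLeComp i j k (leOfHom hij) (leOfHom hjk)).op σ)
        = X.map (mkOfLe i j (leOfHom hij)).op σ := by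
      rw [← FunctorToTypes.map_comp_apply, ← op_comp]
      exact map_eq_of_hom_eq X (by apply Hom.ext_one_left <;> rfl) σ
    have h1 : X.map (mkOfSucc 1).op
        (X.map (mkOfLeComp i j k (leOfHom hij) (leOfHom hjk)).op σ)
        = X.map (mkOfLe j k (leOfHom hjk)).op σ := by
      rw [← FunctorToTypes.map_comp_apply, ← op_comp]
      exact map_eq_of_hom_eq X (by apply Hom.ext_one_left <;> rfl) σ
    have key := eComp_eq_of_filler _ _ hcomp _ h0 h1
    have keyc : X.map (diag 2).op
        (X.map (mkOfLeComp i j k (leOfHom hij) (leOfHom hjk)).op σ)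
        = X.map (mkOfLe i k (leOfHom (hij ≫ hjk))).op σ := by
      rw [← FunctorToTypes.map_comp_apply, ← op_comp]
      refine map_eq_of_hom_eq X ?_ σ
      apply Hom.ext_one_left
      · rfl
      · show (Hom.toOrderHom (mkOfLeComp i j k (leOfHom hij) (leOfHom hjk)))
            ((Hom.toOrderHom (diag 2)) 1) = k
        have hd : (Hom.toOrderHom (diag 2)) 1 = 2 := by decide
        rw [hd]
        rfl
    exact Subtype.ext (keyc.symm.trans key.symm)

lemma eqToHom_conj_val {x x' y y' : X.obj (Opposite.op (SimplexCategory.mk 0))}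
    (hx : x = x') (hy : y' = y) (g : x' ⟶ y') :
    (CategoryTheory.eqToHom hx ≫ g ≫ CategoryTheory.eqToHom hy).1 = g.1 := by
  subst hx
  subst hy
  rw [CategoryTheory.eqToHom_refl, CategoryTheory.eqToHom_refl, CategoryTheory.Category.id_comp,
    CategoryTheory.Category.comp_id]

lemma segal_hom_ext {x y x' y' : X.obj (Opposite.op (SimplexCategory.mk 0))}
    (hx : x = x') (hy : y = y') (f : x ⟶ y) (g : x' ⟶ y') (h : f.1 = g.1) :
    f = CategoryTheory.eqToHom hx ≫ g ≫ CategoryTheory.eqToHom hy.symm := by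
  subst hx
  subst hy
  rw [CategoryTheory.eqToHom_refl, CategoryTheory.eqToHom_refl, CategoryTheory.Category.id_comp,
    CategoryTheory.Category.comp_id]
  exact Subtype.ext h

lemma toCA_map_natural {m n : ℕ} (α : SimplexCategory.mk m ⟶ SimplexCategory.mk n)
    (σ : X.obj (Opposite.op (SimplexCategory.mk n))) (i j : Fin (m + 1)) (hij : i ⟶ j) :
    ((toCA X (X.map α.op σ)).map hij).1
      = ((toCA X σ).map (CategoryTheory.homOfLE
          (α.toOrderHom.monotone (leOfHom hij)))).1 := by
  show X.map (mkOfLe i j (leOfHom hij)).op (X.map α.op σ) = X.map (mkOfLe _ _ _).op σ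
  rw [← FunctorToTypes.map_comp_apply, ← op_comp]
  exact map_eq_of_hom_eq X (by apply Hom.ext_one_left <;> rfl) σ

lemma toCA_natural {m n : ℕ} (α : SimplexCategory.mk m ⟶ SimplexCategory.mk n)
    (σ : X.obj (Opposite.op (SimplexCategory.mk n))) :
    toCA X (X.map α.op σ)
      = (nerve (X.obj (Opposite.op (SimplexCategory.mk 0)))).map α.op (toCA X σ) := by
  have hobj : ∀ i : Fin (m + 1), (toCA X (X.map α.op σ)).obj i
      = ((nerve (X.obj (Opposite.op (SimplexCategory.mk 0)))).map α.op (toCA X σ)).obj i := by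
    intro i
    show X.map (const (SimplexCategory.mk 0) (SimplexCategory.mk m) i).op (X.map α.op σ)
      = X.map (const (SimplexCategory.mk 0) (SimplexCategory.mk n) (α.toOrderHom i)).op σ
    rw [← FunctorToTypes.map_comp_apply, ← op_comp, SimplexCategory.const_comp]
  refine CategoryTheory.ComposableArrows.ext hobj ?_
  intro i hi
  refine segal_hom_ext X (hobj _) (hobj _) _ _ ?_
  exact toCA_map_natural X α σ _ _ _

lemma toCA_bijective (n : ℕ) :
    Function.Bijective (toCA X (n := n)) := by
  constructor
  · intro σ σ' h
    apply spineInjective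
    ext i
    · exact congrArg (fun F => F.obj i) h
    · show X.map (mkOfSucc i).op σ = X.map (mkOfSucc i).op σ'
      have hle : (⟨i.1, by omega⟩ : Fin (n + 1)) ≤ ⟨i.1 + 1, by omega⟩ := by
        simp only [Fin.mk_le_mk]
        omega
      have key := CategoryTheory.Functor.congr_hom h (CategoryTheory.homOfLE hle)
      have harr : ∀ τ : X.obj (Opposite.op (SimplexCategory.mk n)),
          X.map (mkOfSucc i).op τ = ((toCA X τ).map (CategoryTheory.homOfLE hle)).1 := by
        intro τ
        exact map_eq_of_hom_eq X (by
          apply Hom.ext_one_left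
          · apply Fin.ext
            rfl
          · apply Fin.ext
            rfl) τ
      rw [harr σ, harr σ', key]
      exact eqToHom_conj_val X _ _ _
  · intro F
    refine ⟨spineToSimplex
      { vertex := fun i => F.obj i
        arrow := fun i => (F.map' i.1 (i.1 + 1) (by omega) (by omega)).1
        arrow_src := fun i => (F.map' i.1 (i.1 + 1) (by omega) (by omega)).2.1
        arrow_tgt := fun i => (F.map' i.1 (i.1 + 1) (by omega) (by omega)).2.2 }, ?_⟩
    refine CategoryTheory.ComposableArrows.ext (fun i => spineToSimplex_vertex i _) ?_
    intro i hi
    refine segal_hom_ext X (spineToSimplex_vertex _ _) (spineToSimplex_vertex _ _) _ _ ?_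
    refine Eq.trans (map_eq_of_hom_eq X (v := mkOfSucc (⟨i, hi⟩ : Fin n)) ?_ _) ?_
    · apply Hom.ext_one_left
      · apply Fin.ext
        rfl
      · apply Fin.ext
        rfl
    · exact spineToSimplex_arrow _ _

/-- A strict Segal simplicial set is isomorphic to the nerve of a category. -/
noncomputable def segalIsoNerve :
    X ≅ nerve (X.obj (Opposite.op (SimplexCategory.mk 0))) :=
  CategoryTheory.NatIso.ofComponents
    (fun Δ => (Equiv.ofBijective _ (toCA_bijective X Δ.unop.len)).toIso)
    (by
      intro Δ Δ' f
      ext σ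
      exact toCA_natural X (m := Δ'.unop.len) (n := Δ.unop.len) f.unop σ)

end SegalAux6

/-- The nerve of a small category satisfies the Segal condition (the canonical map
`N(C)_{m+n} → N(C)_m ×_{N(C)_0} N(C)_n` is a bijection), and conversely any simplicial
set satisfying the Segal condition is isomorphic to the nerve of a category. -/
theorem stmt5 :
    (∀ (C : Type u) [SmallCategory C], SatisfiesSegal (nerve C)) ∧
    (∀ X : SSet.{u}, SatisfiesSegal X →
      ∃ (C : Type u) (_ : SmallCategory C), Nonempty (X ≅ nerve C)) := by
  constructor
  · intro C _
    exact satisfiesSegal_of_strictSegal (nerve C)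
  · intro X hX
    haveI : SSet.IsStrictSegal X :=
      strictSegalOfSpineBijective X (spine_bijective_of_satisfiesSegal X hX)
    exact ⟨X.obj (Opposite.op (SimplexCategory.mk 0)), segalCategory X, ⟨segalIsoNerve X⟩⟩
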